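/- arXiv:2009.03417 — 4 statements merged into one kernel-verified Lean document; each statement's English description precedes it below -/
import Mathlib

section
/- A d-feature linear context logit is identifiable from a choice dataset D if and only if the span of the set of vectors { [x_C; 1] ⊗ (x_i − x_C) : C ∈ C_D, i ∈ C } equals ℝ^{d²+d}, where [x_C; 1] ∈ ℝ^{d+1} is the mean feature vector of C appended with a 1, ⊗ denotes the Kronecker product of vectors, and C_D is the set of distinct choice sets appearing in D. -/
open Finset Matrix

/-- The mean feature vector of a choice set `C`. -/
noncomputable def meanFeat {ι : Type*} {d : ℕ} (x : ι → Fin d → ℝ) (C : Finset ι) :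
    Fin d → ℝ :=
  (C.card : ℝ)⁻¹ • ∑ j ∈ C, x j

/-- Choice probabilities of the linear context logit (LCL) with parameters `θ, A`. -/
noncomputable def lclProb {ι : Type*} {d : ℕ} (x : ι → Fin d → ℝ)
    (θ : Fin d → ℝ) (A : Matrix (Fin d) (Fin d) ℝ) (C : Finset ι) (i : ι) : ℝ :=
  Real.exp ((θ + A.mulVec (meanFeat x C)) ⬝ᵥ x i) /
    ∑ j ∈ C, Real.exp ((θ + A.mulVec (meanFeat x C)) ⬝ᵥ x j)

/-- Pairing identity: Kronecker vector dotted with the snoc-encoded parameters. -/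
lemma pairing {d : ℕ} (θ : Fin d → ℝ) (A : Matrix (Fin d) (Fin d) ℝ) (m y : Fin d → ℝ) :
    (fun q : Fin (d+1) × Fin d => (Fin.snoc m 1 : Fin (d+1) → ℝ) q.1 * y q.2) ⬝ᵥ
      (fun q : Fin (d+1) × Fin d =>
        (Fin.snoc (fun a => A q.2 a) (θ q.2) : Fin (d+1) → ℝ) q.1)
    = (θ + A.mulVec m) ⬝ᵥ y := by
  simp only [dotProduct, Fintype.sum_prod_type, Pi.add_apply, mulVec, dotProduct]
  rw [Fin.sum_univ_castSucc]
  simp only [Fin.snoc_castSucc, Fin.snoc_last]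
  rw [Finset.sum_comm]
  rw [← Finset.sum_add_distrib]
  refine Finset.sum_congr rfl fun b _ => ?_
  rw [add_mul, Finset.sum_mul,
    Finset.sum_congr rfl (fun a _ => show m a * y b * A b a = A b a * m a * y b by ring)]
  ring

/-- If the utility is constant on `C`, the choice probability is `1/|C|`. -/
lemma lclProb_const {ι : Type*} {d : ℕ} (x : ι → Fin d → ℝ) (θ : Fin d → ℝ)
    (A : Matrix (Fin d) (Fin d) ℝ) (C : Finset ι) (hC : C.Nonempty) (c : ℝ)
    (h : ∀ j ∈ C, (θ + A.mulVec (meanFeat x C)) ⬝ᵥ x j = c) {i : ι} (hi : i ∈ C) :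
    lclProb x θ A C i = (C.card : ℝ)⁻¹ := by
  unfold lclProb
  rw [h i hi, Finset.sum_congr rfl (fun j hj => by rw [h j hj]), Finset.sum_const,
    nsmul_eq_mul]
  rw [mul_comm, div_mul_eq_div_div_swap, div_right_comm, div_self (Real.exp_ne_zero c), one_div]

/-- Dot product with a mean feature vector. -/
lemma dot_mean {ι : Type*} {d : ℕ} (v : Fin d → ℝ) (x : ι → Fin d → ℝ) (C : Finset ι) :
    v ⬝ᵥ meanFeat x C = (C.card : ℝ)⁻¹ * ∑ j ∈ C, v ⬝ᵥ x j := by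
  unfold meanFeat
  rw [dotProduct_smul, smul_eq_mul]
  congr 1
  simp only [dotProduct, Finset.sum_apply, Finset.mul_sum]
  exact Finset.sum_comm

/-- Equal probabilities force the utility-difference vector to be orthogonal to
`x i - meanFeat x C` for every `i ∈ C`. -/
lemma diff_dot_eq_zero {ι : Type*} {d : ℕ} (x : ι → Fin d → ℝ)
    (θ θ' : Fin d → ℝ) (A A' : Matrix (Fin d) (Fin d) ℝ) (C : Finset ι) (hC : C.Nonempty)
    (hprob : ∀ j ∈ C, lclProb x θ A C j = lclProb x θ' A' C j) {i : ι} (hi : i ∈ C) :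
    ((θ - θ') + (A - A').mulVec (meanFeat x C)) ⬝ᵥ (x i - meanFeat x C) = 0 := by
  set m := meanFeat x C with hm
  set S : ℝ := ∑ j ∈ C, Real.exp ((θ + A.mulVec m) ⬝ᵥ x j) with hS
  set S' : ℝ := ∑ j ∈ C, Real.exp ((θ' + A'.mulVec m) ⬝ᵥ x j) with hS'
  have hSpos : 0 < S := Finset.sum_pos (fun j _ => Real.exp_pos _) hC
  have hS'pos : 0 < S' := Finset.sum_pos (fun j _ => Real.exp_pos _) hC
  set c : ℝ := Real.log (S / S') with hc
  have hdiff : ∀ j ∈ C,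
      (θ + A.mulVec m) ⬝ᵥ x j - (θ' + A'.mulVec m) ⬝ᵥ x j = c := by
    intro j hj
    have h := hprob j hj
    unfold lclProb at h
    rw [← hm] at h
    rw [← hS, ← hS'] at h
    rw [div_eq_div_iff hSpos.ne' hS'pos.ne'] at h
    have hexp : Real.exp ((θ + A.mulVec m) ⬝ᵥ x j - (θ' + A'.mulVec m) ⬝ᵥ x j)
        = S / S' := by
      rw [Real.exp_sub, div_eq_div_iff (Real.exp_pos _).ne' hS'pos.ne']
      linarith [h]
    rw [hc, ← hexp, Real.log_exp]
  have key : ((θ - θ') + (A - A').mulVec m) = (θ + A.mulVec m) - (θ' + A'.mulVec m) := by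
    rw [Matrix.sub_mulVec]; abel
  have hcard : (0:ℝ) < C.card := by exact_mod_cast Finset.card_pos.mpr hC
  rw [key, dotProduct_sub]
  have h1 : ((θ + A.mulVec m) - (θ' + A'.mulVec m)) ⬝ᵥ x i = c := by
    rw [sub_dotProduct]; exact hdiff i hi
  have h2 : ((θ + A.mulVec m) - (θ' + A'.mulVec m)) ⬝ᵥ m = c := by
    rw [hm, dot_mean, ← hm,
      Finset.sum_congr rfl (fun j hj => (sub_dotProduct _ _ _).trans (hdiff j hj)),
      Finset.sum_const, nsmul_eq_mul, ← mul_assoc, inv_mul_cancel₀ hcard.ne', one_mul]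
  rw [h1, h2, sub_self]
/-- A `d`-feature linear context logit is identifiable from a dataset `D`
(i.e., any two parameter pairs producing identical choice probabilities on every choice
set of `D` coincide) if and only if the span of
`{ [x_C; 1] ⊗ (x_i − x_C) : C ∈ C_D, i ∈ C }` is all of `ℝ^{d²+d}`. -/
theorem statement3 {ι : Type*} [DecidableEq ι] {d : ℕ} (x : ι → Fin d → ℝ)
    (D : Finset (ι × Finset ι)) (hD : ∀ p ∈ D, p.1 ∈ p.2 ∧ p.2.Nonempty) :
    (∀ (θ θ' : Fin d → ℝ) (A A' : Matrix (Fin d) (Fin d) ℝ),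
        (∀ C ∈ D.image Prod.snd, ∀ i ∈ C, lclProb x θ A C i = lclProb x θ' A' C i) →
        θ = θ' ∧ A = A')
      ↔ Submodule.span ℝ
          { v : Fin (d + 1) × Fin d → ℝ |
            ∃ C ∈ D.image Prod.snd, ∃ i ∈ C,
              v = fun q => (Fin.snoc (meanFeat x C) 1 : Fin (d + 1) → ℝ) q.1 *
                    (x i - meanFeat x C) q.2 } = ⊤ := by
  set SS : Set (Fin (d + 1) × Fin d → ℝ) :=
    { v : Fin (d + 1) × Fin d → ℝ |
      ∃ C ∈ D.image Prod.snd, ∃ i ∈ C,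
        v = fun q => (Fin.snoc (meanFeat x C) 1 : Fin (d + 1) → ℝ) q.1 *
              (x i - meanFeat x C) q.2 } with hSS
  have hne : ∀ C ∈ D.image Prod.snd, C.Nonempty := by
    intro C hC
    obtain ⟨p, hp, rfl⟩ := Finset.mem_image.mp hC
    exact (hD p hp).2
  constructor
  · -- identifiability → full span
    intro hid
    by_contra hnetop
    obtain ⟨φ, hφ0, hφbot⟩ :=
      Submodule.exists_dual_map_eq_bot_of_lt_top (lt_top_iff_ne_top.mpr hnetop)
        inferInstance
    set w : Fin (d + 1) × Fin d → ℝ :=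
      fun q => φ (fun q' => if q = q' then 1 else 0) with hwdef
    have hφv : ∀ v : Fin (d + 1) × Fin d → ℝ, φ v = v ⬝ᵥ w := by
      intro v
      rw [LinearMap.pi_apply_eq_sum_univ φ v]
      simp [dotProduct, hwdef, smul_eq_mul]
    set θ₀ : Fin d → ℝ := fun b => w (Fin.last d, b) with hθ₀
    set A₀ : Matrix (Fin d) (Fin d) ℝ := fun b a => w (a.castSucc, b) with hA₀
    have hw : w = fun q : Fin (d + 1) × Fin d =>
        (Fin.snoc (fun a => A₀ q.2 a) (θ₀ q.2) : Fin (d + 1) → ℝ) q.1 := by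
      funext q
      obtain ⟨a, b⟩ := q
      refine Fin.lastCases ?_ (fun a' => ?_) a
      · simp [hθ₀]
      · simp [hA₀]
    have hzero : ∀ C ∈ D.image Prod.snd, ∀ i ∈ C,
        lclProb x θ₀ A₀ C i = lclProb x 0 0 C i := by
      intro C hC i hi
      have hCne := hne C hC
      have hconst : ∀ j ∈ C,
          (θ₀ + A₀.mulVec (meanFeat x C)) ⬝ᵥ x j
            = (θ₀ + A₀.mulVec (meanFeat x C)) ⬝ᵥ meanFeat x C := by
        intro j hj
        have hvmem : (fun q : Fin (d + 1) × Fin d =>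
            (Fin.snoc (meanFeat x C) 1 : Fin (d + 1) → ℝ) q.1 *
              (x j - meanFeat x C) q.2) ∈ SS := ⟨C, hC, j, hj, rfl⟩
        have hφz : φ (fun q : Fin (d + 1) × Fin d =>
            (Fin.snoc (meanFeat x C) 1 : Fin (d + 1) → ℝ) q.1 *
              (x j - meanFeat x C) q.2) = 0 := by
          have : φ (fun q : Fin (d + 1) × Fin d =>
              (Fin.snoc (meanFeat x C) 1 : Fin (d + 1) → ℝ) q.1 *
                (x j - meanFeat x C) q.2) ∈ (Submodule.span ℝ SS).map φ :=
            Submodule.mem_map_of_mem (Submodule.subset_span hvmem)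
          rwa [hφbot, Submodule.mem_bot] at this
        rw [hφv, hw, pairing θ₀ A₀, dotProduct_sub] at hφz
        linarith [hφz]
      rw [lclProb_const x θ₀ A₀ C hCne _ hconst hi,
        lclProb_const x 0 0 C hCne 0 (fun j _ => by simp) hi]
    obtain ⟨hθeq, hAeq⟩ := hid θ₀ 0 A₀ 0 hzero
    apply hφ0
    have hw0 : w = 0 := by
      funext q
      obtain ⟨a, b⟩ := q
      refine Fin.lastCases ?_ (fun a' => ?_) a
      · have := congrFun hθeq b
        simpa [hθ₀] using this
      · have := congrFun (congrFun hAeq b) a'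
        simpa [hA₀] using this
    apply LinearMap.ext
    intro v
    rw [LinearMap.zero_apply, hφv, hw0]
    simp
  · -- full span → identifiability
    intro hspan θ θ' A A' hprob
    set w : Fin (d + 1) × Fin d → ℝ :=
      fun q => (Fin.snoc (fun a => (A - A') q.2 a) ((θ - θ') q.2) : Fin (d + 1) → ℝ) q.1
      with hw
    have hker : ∀ v ∈ SS, v ⬝ᵥ w = 0 := by
      rintro v ⟨C, hC, i, hi, rfl⟩
      rw [hw, pairing (θ - θ') (A - A')]
      exact diff_dot_eq_zero x θ θ' A A' C (hne C hC) (hprob C hC) hi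
    let f : ((Fin (d + 1) × Fin d) → ℝ) →ₗ[ℝ] ℝ :=
      { toFun := fun v => v ⬝ᵥ w
        map_add' := fun a b => add_dotProduct a b w
        map_smul' := fun c a => smul_dotProduct c a w }
    have hle : Submodule.span ℝ SS ≤ LinearMap.ker f :=
      Submodule.span_le.mpr fun v hv => LinearMap.mem_ker.mpr (hker v hv)
    rw [hspan, top_le_iff] at hle
    have hw0 : ∀ q, w q = 0 := by
      intro q
      have hq : f (Pi.single q 1) = 0 := by
        rw [← LinearMap.mem_ker, hle]; exact Submodule.mem_top
      rwa [show f (Pi.single q 1) = w q by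
        simp [f, single_dotProduct]] at hq
    constructor
    · funext b
      have := hw0 (Fin.last d, b)
      simp only [hw, Fin.snoc_last, Pi.sub_apply] at this
      linarith [this]
    · funext b a
      have := hw0 (a.castSucc, b)
      simp only [hw, Fin.snoc_castSucc, Matrix.sub_apply] at this
      linarith [this]
end

section
/- If a choice dataset contains d+1 distinct choice sets C_0, …, C_d such that (i) the mean feature vectors x_{C_0}, …, x_{C_d} ∈ ℝ^d are affinely independent, and (ii) each choice set C_i contains some set of d+1 items whose feature vectors are affinely independent, then the d-feature linear context logit is uniquely identifiable from the dataset: any two parameter pairs (θ, A) and (θ', A') producing identical choice probabilities on every choice set in the dataset must be equal. -/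
open Finset Matrix

section Helpers

open Matrix

private lemma span_diff_top' {d : ℕ} (y : Fin (d+1) → Fin d → ℝ) (h : AffineIndependent ℝ y) :
    Submodule.span ℝ (Set.range fun j : {j : Fin (d+1) // j ≠ 0} => y j - y 0) = ⊤ := by
  have hli : LinearIndependent ℝ (fun j : {j : Fin (d+1) // j ≠ 0} => y j - y 0) :=
    (affineIndependent_iff_linearIndependent_vsub ℝ y 0).mp h
  apply Submodule.eq_top_of_finrank_eq
  rw [finrank_span_eq_card hli]
  simp

private lemma dot_zero_of_span' {d : ℕ} (y : Fin (d+1) → Fin d → ℝ) (h : AffineIndependent ℝ y)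
    (v : Fin d → ℝ) (hv : ∀ j : Fin (d+1), v ⬝ᵥ (y j - y 0) = 0) : v = 0 := by
  have hspan := span_diff_top' y h
  have hker : ∀ u : Fin d → ℝ, v ⬝ᵥ u = 0 := by
    intro u
    have hu : u ∈ Submodule.span ℝ (Set.range fun j : {j : Fin (d+1) // j ≠ 0} => y j - y 0) := by
      rw [hspan]; trivial
    induction hu using Submodule.span_induction with
    | mem z hz => obtain ⟨j, rfl⟩ := hz; exact hv j
    | zero => simp
    | add a b _ _ ha hb => rw [dotProduct_add, ha, hb, add_zero]
    | smul c a _ ha => rw [dotProduct_smul, ha, smul_zero]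
  exact dotProduct_self_eq_zero.mp (hker v)

private lemma mulvec_zero_of_span' {d : ℕ} (y : Fin (d+1) → Fin d → ℝ)
    (h : AffineIndependent ℝ y) (B : Matrix (Fin d) (Fin d) ℝ)
    (hv : ∀ j : Fin (d+1), B.mulVec (y j - y 0) = 0) : B = 0 := by
  have hspan := span_diff_top' y h
  have hker : ∀ u : Fin d → ℝ, B.mulVec u = 0 := by
    intro u
    have hu : u ∈ Submodule.span ℝ (Set.range fun j : {j : Fin (d+1) // j ≠ 0} => y j - y 0) := by
      rw [hspan]; trivial
    induction hu using Submodule.span_induction with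
    | mem z hz => obtain ⟨j, rfl⟩ := hz; exact hv j
    | zero => simp [Matrix.mulVec_zero]
    | add a b _ _ ha hb => rw [Matrix.mulVec_add, ha, hb, add_zero]
    | smul c a _ ha => rw [Matrix.mulVec_smul, ha, smul_zero]
  ext i j
  have := congrFun (hker (Pi.single j 1)) i
  simpa [Matrix.mulVec_single] using this

private lemma weight_dot_eq' {ι : Type*} {d : ℕ} (x : ι → Fin d → ℝ) (C : Finset ι)
    (w w' : Fin d → ℝ) (i i0 : ι) (hi : i ∈ C) (hi0 : i0 ∈ C)
    (h : ∀ j ∈ C, Real.exp (w ⬝ᵥ x j) / ∑ l ∈ C, Real.exp (w ⬝ᵥ x l)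
        = Real.exp (w' ⬝ᵥ x j) / ∑ l ∈ C, Real.exp (w' ⬝ᵥ x l)) :
    (w - w') ⬝ᵥ (x i - x i0) = 0 := by
  have hS : 0 < ∑ l ∈ C, Real.exp (w ⬝ᵥ x l) :=
    Finset.sum_pos (fun l _ => Real.exp_pos _) ⟨i, hi⟩
  have hS' : 0 < ∑ l ∈ C, Real.exp (w' ⬝ᵥ x l) :=
    Finset.sum_pos (fun l _ => Real.exp_pos _) ⟨i, hi⟩
  have h1 := h i hi
  have h2 := h i0 hi0
  have e1 : Real.exp (w ⬝ᵥ x i) * ∑ l ∈ C, Real.exp (w' ⬝ᵥ x l)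
      = Real.exp (w' ⬝ᵥ x i) * ∑ l ∈ C, Real.exp (w ⬝ᵥ x l) := by
    field_simp at h1; linarith
  have e2 : Real.exp (w ⬝ᵥ x i0) * ∑ l ∈ C, Real.exp (w' ⬝ᵥ x l)
      = Real.exp (w' ⬝ᵥ x i0) * ∑ l ∈ C, Real.exp (w ⬝ᵥ x l) := by
    field_simp at h2; linarith
  have key : Real.exp (w ⬝ᵥ x i) * Real.exp (w' ⬝ᵥ x i0)
      = Real.exp (w' ⬝ᵥ x i) * Real.exp (w ⬝ᵥ x i0) := by
    have h3 : Real.exp (w ⬝ᵥ x i) * Real.exp (w' ⬝ᵥ x i0) * ∑ l ∈ C, Real.exp (w ⬝ᵥ x l)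
        = Real.exp (w' ⬝ᵥ x i) * Real.exp (w ⬝ᵥ x i0) * ∑ l ∈ C, Real.exp (w ⬝ᵥ x l) := by
      calc Real.exp (w ⬝ᵥ x i) * Real.exp (w' ⬝ᵥ x i0) * ∑ l ∈ C, Real.exp (w ⬝ᵥ x l)
          = (Real.exp (w ⬝ᵥ x i0) * ∑ l ∈ C, Real.exp (w' ⬝ᵥ x l)) * Real.exp (w ⬝ᵥ x i) := by
            rw [e2]; ring
        _ = (Real.exp (w ⬝ᵥ x i) * ∑ l ∈ C, Real.exp (w' ⬝ᵥ x l)) * Real.exp (w ⬝ᵥ x i0) := by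
            ring
        _ = _ := by rw [e1]; ring
    exact mul_right_cancel₀ (ne_of_gt hS) h3
  rw [← Real.exp_add, ← Real.exp_add] at key
  have := Real.exp_eq_exp.mp key
  rw [sub_dotProduct, dotProduct_sub, dotProduct_sub]
  linarith

end Helpers


/-- If a choice dataset contains `d+1` distinct choice sets whose mean
feature vectors are affinely independent, and each of these choice sets contains `d+1`
items with affinely independent feature vectors, then the `d`-feature LCL is uniquely
identifiable: any two parameter pairs producing identical choice probabilities on every
choice set in the dataset must be equal. -/
theorem statement5 {ι : Type*} [DecidableEq ι] {d : ℕ} (x : ι → Fin d → ℝ)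
    (D : Finset (ι × Finset ι)) (hD : ∀ p ∈ D, p.1 ∈ p.2 ∧ p.2.Nonempty)
    (Cs : Fin (d + 1) → Finset ι) (hmem : ∀ k, Cs k ∈ D.image Prod.snd)
    (hdist : Function.Injective Cs)
    (haff : AffineIndependent ℝ (fun k => meanFeat x (Cs k)))
    (hitems : ∀ k, ∃ it : Fin (d + 1) → ι,
        (∀ j, it j ∈ Cs k) ∧ AffineIndependent ℝ (fun j => x (it j)))
    (θ θ' : Fin d → ℝ) (A A' : Matrix (Fin d) (Fin d) ℝ)
    (heq : ∀ C ∈ D.image Prod.snd, ∀ i ∈ C, lclProb x θ A C i = lclProb x θ' A' C i) :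
    θ = θ' ∧ A = A' := by
  -- Step 1: equal effective weights on each of the special choice sets
  have hw : ∀ k, θ + A.mulVec (meanFeat x (Cs k)) = θ' + A'.mulVec (meanFeat x (Cs k)) := by
    intro k
    obtain ⟨it, hit, haffit⟩ := hitems k
    set w := θ + A.mulVec (meanFeat x (Cs k)) with hwdef
    set w' := θ' + A'.mulVec (meanFeat x (Cs k)) with hwdef'
    have hprob : ∀ j ∈ Cs k, Real.exp (w ⬝ᵥ x j) / ∑ l ∈ Cs k, Real.exp (w ⬝ᵥ x l)
        = Real.exp (w' ⬝ᵥ x j) / ∑ l ∈ Cs k, Real.exp (w' ⬝ᵥ x l) := by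
      intro j hj
      have := heq (Cs k) (hmem k) j hj
      simpa [lclProb, hwdef, hwdef'] using this
    have hdot : ∀ j : Fin (d+1), (w - w') ⬝ᵥ (x (it j) - x (it 0)) = 0 := fun j =>
      weight_dot_eq' x (Cs k) w w' (it j) (it 0) (hit j) (hit 0) hprob
    have : w - w' = 0 := dot_zero_of_span' (fun j => x (it j)) haffit (w - w') hdot
    exact sub_eq_zero.mp this
  -- Step 2: use affine independence of the mean vectors
  set m : Fin (d+1) → Fin d → ℝ := fun k => meanFeat x (Cs k) with hm
  have hBm : ∀ k : Fin (d+1), (A - A').mulVec (m k - m 0) = 0 := by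
    intro k
    have h1 := hw k
    have h2 := hw 0
    have e1 : A.mulVec (m k) - A'.mulVec (m k) = θ' - θ := by
      have := congrFun h1; funext i; have hh := congrFun h1 i
      simp only [Pi.add_apply, Pi.sub_apply] at hh ⊢; linarith
    have e2 : A.mulVec (m 0) - A'.mulVec (m 0) = θ' - θ := by
      funext i; have hh := congrFun h2 i
      simp only [Pi.add_apply, Pi.sub_apply] at hh ⊢; linarith
    rw [Matrix.sub_mulVec, Matrix.mulVec_sub, Matrix.mulVec_sub]
    funext i
    have := congrFun (e1.trans e2.symm) i
    simp only [Pi.sub_apply, Pi.zero_apply] at this ⊢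
    linarith
  have hA : A - A' = 0 := mulvec_zero_of_span' m haff (A - A') hBm
  have hA' : A = A' := sub_eq_zero.mp hA
  refine ⟨?_, hA'⟩
  have := hw 0
  rw [hA'] at this
  exact add_right_cancel this
end

section
/- The negative log-likelihood of the linear context logit, −ℓ(θ, A; D) = ∑_{(i,C)∈D} [ −(θ + A x_C)^T x_i + log ∑_{j∈C} exp((θ + A x_C)^T x_j) ], is a convex function of the parameters (θ, A) jointly on ℝ^d × ℝ^{d×d} (equivalently, the LCL likelihood function is log-concave in its parameters). -/
open Finset Matrix

/-- Log-sum-exp over a nonempty finite set is convex. -/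
lemma convexOn_lse {ι : Type*} (C : Finset ι) (hC : C.Nonempty) :
    ConvexOn ℝ Set.univ (fun u : ι → ℝ => Real.log (∑ j ∈ C, Real.exp (u j))) := by
  refine ⟨convex_univ, ?_⟩
  intro u _ v _ a b ha hb hab
  rcases ha.eq_or_lt with rfl | ha'
  · obtain rfl : b = 1 := by linarith
    simp
  rcases hb.eq_or_lt with rfl | hb'
  · obtain rfl : a = 1 := by linarith
    simp
  have hSu : 0 < ∑ j ∈ C, Real.exp (u j) :=
    Finset.sum_pos (fun j _ => Real.exp_pos _) hC
  have hSv : 0 < ∑ j ∈ C, Real.exp (v j) :=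
    Finset.sum_pos (fun j _ => Real.exp_pos _) hC
  have ha1 : a < 1 := by linarith
  have hpq : Real.HolderConjugate a⁻¹ b⁻¹ := by
    constructor
    · rw [inv_inv, inv_inv, inv_one]; exact hab
    · exact inv_pos.mpr ha'
    · exact inv_pos.mpr hb'
  have key : ∑ j ∈ C, Real.exp ((a • u + b • v) j)
      ≤ (∑ j ∈ C, Real.exp (u j)) ^ a * (∑ j ∈ C, Real.exp (v j)) ^ b := by
    have H := Real.inner_le_Lp_mul_Lq_of_nonneg (s := C) hpq
      (f := fun j => Real.exp (a * u j)) (g := fun j => Real.exp (b * v j))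
      (fun j _ => (Real.exp_pos _).le) (fun j _ => (Real.exp_pos _).le)
    have h1 : ∀ j, Real.exp (a * u j) ^ a⁻¹ = Real.exp (u j) := by
      intro j
      rw [← Real.exp_mul, mul_comm a (u j), mul_assoc, mul_inv_cancel₀ ha'.ne', mul_one]
    have h2 : ∀ j, Real.exp (b * v j) ^ b⁻¹ = Real.exp (v j) := by
      intro j
      rw [← Real.exp_mul, mul_comm b (v j), mul_assoc, mul_inv_cancel₀ hb'.ne', mul_one]
    simp only [h1, h2, one_div, inv_inv] at H
    calc ∑ j ∈ C, Real.exp ((a • u + b • v) j)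
        = ∑ j ∈ C, Real.exp (a * u j) * Real.exp (b * v j) := by
          refine Finset.sum_congr rfl fun j _ => ?_
          rw [← Real.exp_add]
          simp [Pi.add_apply, Pi.smul_apply, smul_eq_mul]
      _ ≤ _ := H
  calc Real.log (∑ j ∈ C, Real.exp ((a • u + b • v) j))
      ≤ Real.log ((∑ j ∈ C, Real.exp (u j)) ^ a * (∑ j ∈ C, Real.exp (v j)) ^ b) :=
        Real.log_le_log (Finset.sum_pos (fun j _ => Real.exp_pos _) hC) key
    _ = a • Real.log (∑ j ∈ C, Real.exp (u j)) + b • Real.log (∑ j ∈ C, Real.exp (v j)) := by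
        rw [Real.log_mul (by positivity) (by positivity), Real.log_rpow hSu, Real.log_rpow hSv]
        simp [smul_eq_mul]

/-- A finite sum of convex functions is convex. -/
lemma convexOn_finset_sum {E α : Type*} [AddCommGroup E] [Module ℝ E]
    (t : Finset α) (f : α → E → ℝ) (h : ∀ i ∈ t, ConvexOn ℝ Set.univ (f i)) :
    ConvexOn ℝ Set.univ (fun e => ∑ i ∈ t, f i e) := by
  classical
  induction t using Finset.induction_on with
  | empty => simpa using convexOn_const (0 : ℝ) convex_univ
  | insert _ _ hnot ih =>
    rename_i a s
    simp only [Finset.sum_insert hnot]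
    exact (h a (Finset.mem_insert_self a s)).add
      (ih fun i hi => h i (Finset.mem_insert_of_mem hi))

/-- The parameter-to-utilities map of the LCL is linear. -/
noncomputable def lclLin {ι : Type*} {d : ℕ} (x : ι → Fin d → ℝ) (xC : Fin d → ℝ) :
    ((Fin d → ℝ) × Matrix (Fin d) (Fin d) ℝ) →ₗ[ℝ] (ι → ℝ) where
  toFun e := fun j => (e.1 + e.2.mulVec xC) ⬝ᵥ x j
  map_add' e f := by
    funext j
    simp [Matrix.add_mulVec, add_dotProduct]
    ring
  map_smul' c e := by
    funext j
    simp [Matrix.smul_mulVec, smul_dotProduct, smul_add, smul_eq_mul, mul_add]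

/-- The negative log-likelihood of the linear context logit,
`−ℓ(θ, A; D) = ∑_{(i,C)∈D} [ −(θ + A x_C)ᵀ x_i + log ∑_{j∈C} exp((θ + A x_C)ᵀ x_j) ]`,
is jointly convex in the parameters `(θ, A)` (equivalently, the LCL likelihood is
log-concave in its parameters). -/
theorem statement7 {ι : Type*} {d : ℕ} (x : ι → Fin d → ℝ)
    (D : Finset (ι × Finset ι)) (hD : ∀ p ∈ D, p.1 ∈ p.2 ∧ p.2.Nonempty) :
    ConvexOn ℝ Set.univ
      (fun θA : (Fin d → ℝ) × Matrix (Fin d) (Fin d) ℝ =>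
        ∑ p ∈ D,
          (-((θA.1 + θA.2.mulVec (meanFeat x p.2)) ⬝ᵥ x p.1) +
            Real.log (∑ j ∈ p.2,
              Real.exp ((θA.1 + θA.2.mulVec (meanFeat x p.2)) ⬝ᵥ x j)))) := by
  refine convexOn_finset_sum D _ (fun p hp => ?_)
  obtain ⟨hi, hne⟩ := hD p hp
  -- the summand is (g ∘ L) where L is linear and g convex
  have hneg : ConvexOn ℝ Set.univ (fun u : ι → ℝ => -(u p.1)) := by
    refine ⟨convex_univ, ?_⟩
    intro u _ v _ a b _ _ _
    simp [smul_eq_mul]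
  have hg : ConvexOn ℝ Set.univ
      (fun u : ι → ℝ => -(u p.1) + Real.log (∑ j ∈ p.2, Real.exp (u j))) :=
    hneg.add (convexOn_lse p.2 hne)
  have := hg.comp_affineMap (lclLin x (meanFeat x p.2)).toAffineMap
  rw [Set.preimage_univ] at this
  exact this
end

section
/- The gradient of the negative log-likelihood of the linear context logit, viewed as a function of the parameters (θ, A) ∈ ℝ^d × ℝ^{d×d}, is Lipschitz continuous: for every finite choice dataset D there exists a constant L ≥ 0 (depending on the dataset) such that the gradient of −ℓ(θ, A; D) = ∑_{(i,C)∈D} [ −(θ + A x_C)^T x_i + log ∑_{j∈C} exp((θ + A x_C)^T x_j) ] is L-Lipschitz on all of ℝ^d × ℝ^{d×d}. -/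
open Finset

lemma lipschitzWith_finset_sum {α ι : Type*} [PseudoEMetricSpace α]
    {F : Type*} [NormedAddCommGroup F] (s : Finset ι) (f : ι → α → F) (K : ι → NNReal)
    (h : ∀ i ∈ s, LipschitzWith (K i) (f i)) :
    LipschitzWith (∑ i ∈ s, K i) (fun z => ∑ i ∈ s, f i z) := by
  classical
  induction s using Finset.induction_on with
  | empty => simpa using LipschitzWith.const (0 : F)
  | @insert a s ha ih =>
      simp only [Finset.sum_insert ha]
      exact (h a (Finset.mem_insert_self a s)).add
        (ih fun i hi => h i (Finset.mem_insert_of_mem hi))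

lemma lipschitzWith_smul_const {α : Type*} [PseudoMetricSpace α] {F : Type*}
    [NormedAddCommGroup F] [NormedSpace ℝ F] {f : α → ℝ} {K : NNReal}
    (hf : LipschitzWith K f) (c : F) :
    LipschitzWith (K * ‖c‖₊) fun z => f z • c := by
  refine LipschitzWith.of_dist_le_mul fun a b => ?_
  have : dist (f a • c) (f b • c) = dist (f a) (f b) * ‖c‖ := by
    rw [dist_eq_norm, ← sub_smul, norm_smul, ← dist_eq_norm]
  rw [this]
  have h2 := hf.dist_le_mul a b
  calc dist (f a) (f b) * ‖c‖ ≤ (K * dist a b) * ‖c‖ :=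
        mul_le_mul_of_nonneg_right h2 (norm_nonneg c)
    _ = (K * ‖c‖₊ : NNReal) * dist a b := by push_cast [coe_nnnorm]; ring

lemma lse_key {κ : Type*} {E : Type*} [NormedAddCommGroup E] [NormedSpace ℝ E]
    (C : Finset κ) (hC : C.Nonempty) (ℓ : κ → E →L[ℝ] ℝ) :
    ∃ L : NNReal,
      Differentiable ℝ (fun z : E => Real.log (∑ j ∈ C, Real.exp (ℓ j z))) ∧
      LipschitzWith L (fderiv ℝ (fun z : E => Real.log (∑ j ∈ C, Real.exp (ℓ j z)))) := by
  classical
  set S : E → ℝ := fun z => ∑ j ∈ C, Real.exp (ℓ j z) with hSdef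
  have hSpos : ∀ z, 0 < S z := fun z => Finset.sum_pos (fun j _ => Real.exp_pos _) hC
  have hexp_le : ∀ z, ∀ j ∈ C, Real.exp (ℓ j z) ≤ S z := fun z j hj =>
    Finset.single_le_sum (f := fun k => Real.exp (ℓ k z))
      (fun k _ => (Real.exp_pos _).le) hj
  have hS' : ∀ z, HasFDerivAt S (∑ j ∈ C, Real.exp (ℓ j z) • (ℓ j)) z := fun z =>
    HasFDerivAt.fun_sum fun j _ => (Real.hasDerivAt_exp (ℓ j z)).comp_hasFDerivAt z (ℓ j).hasFDerivAt
  set p : κ → E → ℝ := fun j z => Real.exp (ℓ j z) * (S z)⁻¹ with hpdef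
  have hp' : ∀ j z, HasFDerivAt (p j)
      (Real.exp (ℓ j z) • ((-(S z ^ 2)⁻¹) • (∑ k ∈ C, Real.exp (ℓ k z) • (ℓ k)))
        + (S z)⁻¹ • (Real.exp (ℓ j z) • (ℓ j))) z := by
    intro j z
    have h1 : HasFDerivAt (fun z => Real.exp (ℓ j z)) (Real.exp (ℓ j z) • (ℓ j)) z :=
      (Real.hasDerivAt_exp (ℓ j z)).comp_hasFDerivAt z (ℓ j).hasFDerivAt
    have h2 : HasFDerivAt (fun z => (S z)⁻¹)
        ((-(S z ^ 2)⁻¹) • (∑ k ∈ C, Real.exp (ℓ k z) • (ℓ k))) z :=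
      (hasDerivAt_inv (hSpos z).ne').comp_hasFDerivAt z (hS' z)
    exact h1.mul h2
  -- the norm bound on the derivative of p j
  have key : ∀ j ∈ C, ∀ z : E,
      ‖Real.exp (ℓ j z) • ((-(S z ^ 2)⁻¹) • (∑ k ∈ C, Real.exp (ℓ k z) • (ℓ k)))
        + (S z)⁻¹ • (Real.exp (ℓ j z) • (ℓ j))‖ ≤ ‖ℓ j‖ + ∑ k ∈ C, ‖ℓ k‖ := by
    intro j hj z
    have hS := hSpos z
    have hT : ‖∑ k ∈ C, Real.exp (ℓ k z) • (ℓ k)‖ ≤ S z * ∑ k ∈ C, ‖ℓ k‖ := by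
      calc ‖∑ k ∈ C, Real.exp (ℓ k z) • (ℓ k)‖ ≤ ∑ k ∈ C, ‖Real.exp (ℓ k z) • (ℓ k)‖ :=
            norm_sum_le _ _
        _ ≤ ∑ k ∈ C, S z * ‖ℓ k‖ := by
            refine Finset.sum_le_sum fun k hk => ?_
            have e1 : ‖Real.exp (ℓ k z) • (ℓ k)‖ = ‖Real.exp (ℓ k z)‖ * ‖ℓ k‖ :=
              norm_smul (Real.exp (ℓ k z)) (ℓ k)
            rw [e1, Real.norm_eq_abs, abs_of_pos (Real.exp_pos _)]
            exact mul_le_mul_of_nonneg_right (hexp_le z k hk) (norm_nonneg _)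
        _ = S z * ∑ k ∈ C, ‖ℓ k‖ := (Finset.mul_sum _ _ _).symm
    have h1 : ‖Real.exp (ℓ j z) • ((-(S z ^ 2)⁻¹) • (∑ k ∈ C, Real.exp (ℓ k z) • (ℓ k)))‖
        ≤ ∑ k ∈ C, ‖ℓ k‖ := by
      have e0 : ‖((-(S z ^ 2)⁻¹ : ℝ)) • (∑ k ∈ C, Real.exp (ℓ k z) • (ℓ k))‖
          = ‖(-(S z ^ 2)⁻¹ : ℝ)‖ * ‖∑ k ∈ C, Real.exp (ℓ k z) • (ℓ k)‖ :=
        norm_smul ((-(S z ^ 2)⁻¹ : ℝ)) (∑ k ∈ C, Real.exp (ℓ k z) • (ℓ k))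
      have e1 : ‖Real.exp (ℓ j z) • ((-(S z ^ 2)⁻¹) • (∑ k ∈ C, Real.exp (ℓ k z) • (ℓ k)))‖
          = ‖Real.exp (ℓ j z)‖ * (‖(-(S z ^ 2)⁻¹ : ℝ)‖ * ‖∑ k ∈ C, Real.exp (ℓ k z) • (ℓ k)‖) := by
        rw [← e0]
        exact norm_smul (Real.exp (ℓ j z)) (((-(S z ^ 2)⁻¹ : ℝ)) • (∑ k ∈ C, Real.exp (ℓ k z) • (ℓ k)))
      rw [e1, Real.norm_eq_abs, Real.norm_eq_abs, abs_of_pos (Real.exp_pos _), abs_neg,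
        abs_of_pos (inv_pos.2 (pow_pos hS 2))]
      have step : Real.exp (ℓ j z) * ((S z ^ 2)⁻¹ * ‖∑ k ∈ C, Real.exp (ℓ k z) • (ℓ k)‖)
          ≤ S z * ((S z ^ 2)⁻¹ * (S z * ∑ k ∈ C, ‖ℓ k‖)) := by
        refine mul_le_mul (hexp_le z j hj) ?_ (by positivity) hS.le
        exact mul_le_mul_of_nonneg_left hT (by positivity)
      have heq : S z * ((S z ^ 2)⁻¹ * (S z * ∑ k ∈ C, ‖ℓ k‖)) = ∑ k ∈ C, ‖ℓ k‖ := by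
        field_simp
      linarith
    have h2 : ‖(S z)⁻¹ • (Real.exp (ℓ j z) • (ℓ j))‖ ≤ ‖ℓ j‖ := by
      have e0 : ‖Real.exp (ℓ j z) • (ℓ j)‖ = ‖Real.exp (ℓ j z)‖ * ‖ℓ j‖ :=
        norm_smul (Real.exp (ℓ j z)) (ℓ j)
      have e1 : ‖(S z)⁻¹ • (Real.exp (ℓ j z) • (ℓ j))‖
          = ‖(S z)⁻¹‖ * (‖Real.exp (ℓ j z)‖ * ‖ℓ j‖) := by
        rw [← e0]
        exact norm_smul ((S z)⁻¹) (Real.exp (ℓ j z) • (ℓ j))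
      rw [e1, Real.norm_eq_abs, Real.norm_eq_abs, abs_of_pos (inv_pos.2 hS),
        abs_of_pos (Real.exp_pos _)]
      have step : (S z)⁻¹ * (Real.exp (ℓ j z) * ‖ℓ j‖) ≤ (S z)⁻¹ * (S z * ‖ℓ j‖) := by
        refine mul_le_mul_of_nonneg_left ?_ (by positivity)
        exact mul_le_mul_of_nonneg_right (hexp_le z j hj) (norm_nonneg _)
      have heq : (S z)⁻¹ * (S z * ‖ℓ j‖) = ‖ℓ j‖ := by field_simp
      linarith
    calc _ ≤ _ + _ := norm_add_le _ _
      _ ≤ (∑ k ∈ C, ‖ℓ k‖) + ‖ℓ j‖ := add_le_add h1 h2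
      _ = ‖ℓ j‖ + ∑ k ∈ C, ‖ℓ k‖ := add_comm _ _
  -- Lipschitzness of p j
  have hplip : ∀ j ∈ C, LipschitzWith (‖ℓ j‖₊ + ∑ k ∈ C, ‖ℓ k‖₊) (p j) := by
    intro j hj
    refine lipschitzWith_of_nnnorm_fderiv_le (fun z => (hp' j z).differentiableAt) fun z => ?_
    rw [(hp' j z).fderiv, ← NNReal.coe_le_coe]
    push_cast [coe_nnnorm]
    exact key j hj z
  -- identify the derivative of the log-sum-exp
  have hh : ∀ z : E, HasFDerivAt (fun z => Real.log (S z))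
      ((S z)⁻¹ • ∑ j ∈ C, Real.exp (ℓ j z) • (ℓ j)) z := fun z =>
    (Real.hasDerivAt_log (hSpos z).ne').comp_hasFDerivAt z (hS' z)
  refine ⟨∑ j ∈ C, (‖ℓ j‖₊ + ∑ k ∈ C, ‖ℓ k‖₊) * ‖ℓ j‖₊, fun z => (hh z).differentiableAt, ?_⟩
  have hfd : fderiv ℝ (fun z => Real.log (S z)) = fun z => ∑ j ∈ C, p j z • (ℓ j : E →L[ℝ] ℝ) := by
    funext z
    rw [(hh z).fderiv, Finset.smul_sum]
    exact Finset.sum_congr rfl fun j _ => by rw [smul_smul, mul_comm]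
  rw [hfd]
  exact lipschitzWith_finset_sum C _ _ fun j hj => lipschitzWith_smul_const (hplip j hj) (ℓ j)

lemma lse_key' {κ : Type*} {E : Type*} [NormedAddCommGroup E] [NormedSpace ℝ E]
    (C : Finset κ) (ℓ : κ → E →L[ℝ] ℝ) :
    ∃ L : NNReal,
      Differentiable ℝ (fun z : E => Real.log (∑ j ∈ C, Real.exp (ℓ j z))) ∧
      LipschitzWith L (fderiv ℝ (fun z : E => Real.log (∑ j ∈ C, Real.exp (ℓ j z)))) := by
  rcases C.eq_empty_or_nonempty with rfl | hC
  · have hconst : (fun z : E => Real.log (∑ j ∈ (∅ : Finset κ), Real.exp (ℓ j z)))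
        = fun _ : E => Real.log 0 := by simp
    refine ⟨0, ?_, ?_⟩
    · rw [hconst]; exact differentiable_const _
    · rw [hconst, fderiv_fun_const]
      exact LipschitzWith.const' (0 : E →L[ℝ] ℝ)
  · exact lse_key C hC ℓ

noncomputable def ellAux {d : ℕ} (c v : Fin d → ℝ) :
    ((Fin d → ℝ) × (Fin d → Fin d → ℝ)) →L[ℝ] ℝ :=
  LinearMap.toContinuousLinearMap
  { toFun := fun z => ∑ q : Fin d, (z.1 q + ∑ s : Fin d, z.2 q s * c s) * v q
    map_add' := fun a b => by
      rw [← Finset.sum_add_distrib]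
      refine Finset.sum_congr rfl fun q _ => ?_
      simp only [Prod.fst_add, Prod.snd_add, Pi.add_apply, add_mul]
      rw [Finset.sum_add_distrib]
      ring
    map_smul' := fun r a => by
      simp only [Prod.smul_fst, Prod.smul_snd, Pi.smul_apply, smul_eq_mul, RingHom.id_apply]
      rw [Finset.mul_sum]
      refine Finset.sum_congr rfl fun q _ => ?_
      simp only [mul_assoc]
      rw [← Finset.mul_sum]
      ring }


/-- The gradient of the negative log-likelihood of the linear context
logit, as a function of the parameters `(θ, A) ∈ ℝ^d × ℝ^{d×d}` (with the matrix `A`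
represented as `Fin d → Fin d → ℝ` and `(θ + A x_C)ᵀ x_i` written out coordinatewise),
is Lipschitz continuous on all of `ℝ^d × ℝ^{d×d}` with some constant `L` depending on
the dataset. -/
theorem statement12 {ι : Type*} {d : ℕ} (x : ι → Fin d → ℝ)
    (D : Finset (ι × Finset ι)) (hD : ∀ p ∈ D, p.1 ∈ p.2 ∧ p.2.Nonempty) :
    ∃ L : NNReal, LipschitzWith L
      (fderiv ℝ (fun θA : (Fin d → ℝ) × (Fin d → Fin d → ℝ) =>
        ∑ p ∈ D,
          (-(∑ q : Fin d, (θA.1 q + ∑ s : Fin d, θA.2 q s * meanFeat x p.2 s) * x p.1 q) +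
            Real.log (∑ j ∈ p.2,
              Real.exp (∑ q : Fin d,
                (θA.1 q + ∑ s : Fin d, θA.2 q s * meanFeat x p.2 s) * x j q))))) := by
  classical
  have key := fun p : ι × Finset ι => lse_key' p.2 (fun j => ellAux (meanFeat x p.2) (x j))
  choose L hdiff hlip using key
  have hFeq : (fun θA : (Fin d → ℝ) × (Fin d → Fin d → ℝ) =>
        ∑ p ∈ D,
          (-(∑ q : Fin d, (θA.1 q + ∑ s : Fin d, θA.2 q s * meanFeat x p.2 s) * x p.1 q) +
            Real.log (∑ j ∈ p.2,
              Real.exp (∑ q : Fin d,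
                (θA.1 q + ∑ s : Fin d, θA.2 q s * meanFeat x p.2 s) * x j q))))
      = fun z : (Fin d → ℝ) × (Fin d → Fin d → ℝ) =>
        ∑ p ∈ D, (-(ellAux (meanFeat x p.2) (x p.1) z) +
          Real.log (∑ j ∈ p.2, Real.exp (ellAux (meanFeat x p.2) (x j) z))) := rfl
  rw [hFeq]
  have hterm : ∀ (p : ι × Finset ι) (z : (Fin d → ℝ) × (Fin d → Fin d → ℝ)),
      DifferentiableAt ℝ (fun z => -(ellAux (meanFeat x p.2) (x p.1) z) +
        Real.log (∑ j ∈ p.2, Real.exp (ellAux (meanFeat x p.2) (x j) z))) z := by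
    intro p z
    exact ((ellAux (meanFeat x p.2) (x p.1)).differentiable.neg.differentiableAt).add
      ((hdiff p).differentiableAt)
  have hfd : fderiv ℝ (fun z : (Fin d → ℝ) × (Fin d → Fin d → ℝ) =>
        ∑ p ∈ D, (-(ellAux (meanFeat x p.2) (x p.1) z) +
          Real.log (∑ j ∈ p.2, Real.exp (ellAux (meanFeat x p.2) (x j) z))))
      = fun z => ∑ p ∈ D, (-(ellAux (meanFeat x p.2) (x p.1)) +
          fderiv ℝ (fun z => Real.log (∑ j ∈ p.2,
            Real.exp (ellAux (meanFeat x p.2) (x j) z))) z) := by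
    funext z
    rw [fderiv_fun_sum (fun p _ => hterm p z)]
    refine Finset.sum_congr rfl fun p _ => ?_
    rw [fderiv_fun_add ((ellAux (meanFeat x p.2) (x p.1)).differentiable.fun_neg.differentiableAt)
      ((hdiff p).differentiableAt), fderiv_fun_neg, (ellAux (meanFeat x p.2) (x p.1)).fderiv]
  rw [hfd]
  refine ⟨∑ p ∈ D, (0 + L p), ?_⟩
  exact lipschitzWith_finset_sum D _ _ fun p _ =>
    (LipschitzWith.const (-(ellAux (meanFeat x p.2) (x p.1)))).add (hlip p)
end
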